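/- Let E = s²/R₁ + (β/(ν+2))R₁^{ν+2} with β, R₁ > 0. The second positive root R₂ of P(R) = (β/(ν+2))R^{ν+3} − E·R + s² satisfies R₂ > R₁ if and only if s² > β R₁^{ν+3}, and R₂ < R₁ if and only if s² < β R₁^{ν+3} (assuming s² ≠ β R₁^{ν+3} so the roots are distinct). -/

import Mathlib

/-- For `0 < a < b`: `(k+1) a^{k+1} (b-a) < b (b^{k+1} - a^{k+1})`. -/
lemma aux_lower (a b : ℝ) (k : ℕ) (ha : 0 < a) (hab : a < b) :
    ((k : ℝ) + 1) * a ^ (k + 1) * (b - a) < b * (b ^ (k + 1) - a ^ (k + 1)) := by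
  have hb : 0 < b := ha.trans hab
  set S : ℝ := ∑ i ∈ Finset.range (k + 1), b ^ i * a ^ (k - i) with hS
  have hgeom : S * (b - a) = b ^ (k + 1) - a ^ (k + 1) := by
    simpa using geom_sum₂_mul b a (k + 1)
  have hSge : ((k : ℝ) + 1) * a ^ k ≤ S := by
    have : ∀ i ∈ Finset.range (k + 1), a ^ k ≤ b ^ i * a ^ (k - i) := by
      intro i hi
      have hik : i ≤ k := Nat.lt_succ_iff.mp (Finset.mem_range.mp hi)
      calc a ^ k = a ^ i * a ^ (k - i) := by
            rw [← pow_add]; congr 1; omega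
        _ ≤ b ^ i * a ^ (k - i) := by
            apply mul_le_mul_of_nonneg_right (pow_le_pow_left₀ ha.le hab.le i)
            positivity
    calc ((k : ℝ) + 1) * a ^ k = ∑ _i ∈ Finset.range (k + 1), a ^ k := by
          simp [mul_comm]
      _ ≤ S := Finset.sum_le_sum this
  have hSpos : 0 < S := lt_of_lt_of_le (by positivity) hSge
  have h1 : a * S < b * S := by
    exact mul_lt_mul_of_pos_right hab hSpos
  have h2 : ((k : ℝ) + 1) * a ^ (k + 1) ≤ a * S := by
    calc ((k : ℝ) + 1) * a ^ (k + 1) = a * (((k : ℝ) + 1) * a ^ k) := by ring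
      _ ≤ a * S := by exact mul_le_mul_of_nonneg_left hSge ha.le
  calc ((k : ℝ) + 1) * a ^ (k + 1) * (b - a) < b * S * (b - a) := by
        apply mul_lt_mul_of_pos_right (lt_of_le_of_lt h2 h1) (by linarith)
    _ = b * (b ^ (k + 1) - a ^ (k + 1)) := by rw [mul_assoc, hgeom]

/-- For `0 < a < b`: `a (b^{k+1} - a^{k+1}) < (k+1) b^{k+1} (b-a)`. -/
lemma aux_upper (a b : ℝ) (k : ℕ) (ha : 0 < a) (hab : a < b) :
    a * (b ^ (k + 1) - a ^ (k + 1)) < ((k : ℝ) + 1) * b ^ (k + 1) * (b - a) := by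
  have hb : 0 < b := ha.trans hab
  set S : ℝ := ∑ i ∈ Finset.range (k + 1), b ^ i * a ^ (k - i) with hS
  have hgeom : S * (b - a) = b ^ (k + 1) - a ^ (k + 1) := by
    simpa using geom_sum₂_mul b a (k + 1)
  have hSle : S ≤ ((k : ℝ) + 1) * b ^ k := by
    have : ∀ i ∈ Finset.range (k + 1), b ^ i * a ^ (k - i) ≤ b ^ k := by
      intro i hi
      have hik : i ≤ k := Nat.lt_succ_iff.mp (Finset.mem_range.mp hi)
      calc b ^ i * a ^ (k - i) ≤ b ^ i * b ^ (k - i) := by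
            apply mul_le_mul_of_nonneg_left (pow_le_pow_left₀ ha.le hab.le _)
            positivity
        _ = b ^ k := by rw [← pow_add]; congr 1; omega
    calc S ≤ ∑ _i ∈ Finset.range (k + 1), b ^ k := Finset.sum_le_sum this
      _ = ((k : ℝ) + 1) * b ^ k := by simp [mul_comm]
  have hSpos : 0 < S := by
    have : (0:ℝ) < b ^ 0 * a ^ (k - 0) := by positivity
    apply Finset.sum_pos
    · intro i hi; positivity
    · exact ⟨0, Finset.mem_range.mpr (Nat.succ_pos k)⟩
  have h1 : a * S < b * S := mul_lt_mul_of_pos_right hab hSpos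
  have h2 : b * S ≤ ((k : ℝ) + 1) * b ^ (k + 1) := by
    calc b * S ≤ b * (((k : ℝ) + 1) * b ^ k) := mul_le_mul_of_nonneg_left hSle hb.le
      _ = ((k : ℝ) + 1) * b ^ (k + 1) := by ring
  calc a * (b ^ (k + 1) - a ^ (k + 1)) = a * S * (b - a) := by rw [mul_assoc, hgeom]
    _ < ((k : ℝ) + 1) * b ^ (k + 1) * (b - a) := by
        apply mul_lt_mul_of_pos_right (lt_of_lt_of_le h1 h2) (by linarith)

/-- the second positive root R₂ of
P(R) = (β/(ν+2))R^{ν+3} − E·R + s² (with E = s²/R₁ + (β/(ν+2))R₁^{ν+2})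
satisfies R₂ > R₁ iff s² > βR₁^{ν+3}, and R₂ < R₁ iff s² < βR₁^{ν+3},
assuming s² ≠ βR₁^{ν+3} (so the roots are distinct). -/
theorem stmt3 (β s R₁ R₂ : ℝ) (ν : ℕ) (hβ : 0 < β)
    (hR₁ : 0 < R₁) (hR₂ : 0 < R₂)
    (E : ℝ) (hE : E = s ^ 2 / R₁ + β / ((ν : ℝ) + 2) * R₁ ^ (ν + 2))
    (hroot₂ : β / ((ν : ℝ) + 2) * R₂ ^ (ν + 3) - E * R₂ + s ^ 2 = 0)
    (hne : R₂ ≠ R₁) (hcrit : s ^ 2 ≠ β * R₁ ^ (ν + 3)) :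
    (R₁ < R₂ ↔ β * R₁ ^ (ν + 3) < s ^ 2) ∧
    (R₂ < R₁ ↔ s ^ 2 < β * R₁ ^ (ν + 3)) := by
  have hν : ((ν : ℝ) + 2) ≠ 0 := by positivity
  set c : ℝ := β / ((ν : ℝ) + 2) with hc
  have hcpos : 0 < c := by positivity
  have hβc : β = c * ((ν : ℝ) + 2) := by rw [hc]; field_simp
  have hER₁ : E * R₁ = s ^ 2 + c * R₁ ^ (ν + 3) := by
    rw [hE]; field_simp; ring
  -- key identity
  have key : s ^ 2 * (R₂ - R₁) = c * R₁ * R₂ * (R₂ ^ (ν + 2) - R₁ ^ (ν + 2)) := by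
    have h := hroot₂
    have expand : R₂ ^ (ν + 3) = R₂ ^ (ν + 2) * R₂ := by ring
    have expand' : R₁ ^ (ν + 3) = R₁ ^ (ν + 2) * R₁ := by ring
    linear_combination -R₁ * h - R₂ * hER₁
  have hlt : R₁ < R₂ → β * R₁ ^ (ν + 3) < s ^ 2 := by
    intro h
    have haux := aux_lower R₁ R₂ (ν + 1) hR₁ h
    push_cast at haux
    -- haux : (ν+2) * R₁^(ν+2) * (R₂-R₁) < R₂ * (R₂^(ν+2) - R₁^(ν+2))
    have hmul : c * R₁ * (((ν:ℝ) + 2) * R₁ ^ (ν + 2) * (R₂ - R₁)) <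
        c * R₁ * (R₂ * (R₂ ^ (ν + 2) - R₁ ^ (ν + 2))) := by
      apply mul_lt_mul_of_pos_left _ (by positivity)
      convert haux using 2 <;> push_cast <;> first | rfl | ring
    have e1 : c * R₁ * (((ν:ℝ) + 2) * R₁ ^ (ν + 2) * (R₂ - R₁))
        = β * R₁ ^ (ν + 3) * (R₂ - R₁) := by rw [hβc]; ring
    have e2 : c * R₁ * (R₂ * (R₂ ^ (ν + 2) - R₁ ^ (ν + 2)))
        = s ^ 2 * (R₂ - R₁) := by rw [key]; ring
    rw [e1, e2] at hmul
    have : 0 < R₂ - R₁ := by linarith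
    exact lt_of_mul_lt_mul_right (by linarith [hmul]) this.le
  have hgt : R₂ < R₁ → s ^ 2 < β * R₁ ^ (ν + 3) := by
    intro h
    have haux := aux_upper R₂ R₁ (ν + 1) hR₂ h
    push_cast at haux
    have hmul : c * R₁ * (R₂ * (R₁ ^ (ν + 2) - R₂ ^ (ν + 2))) <
        c * R₁ * (((ν:ℝ) + 2) * R₁ ^ (ν + 2) * (R₁ - R₂)) := by
      apply mul_lt_mul_of_pos_left _ (by positivity)
      convert haux using 2 <;> push_cast <;> first | rfl | ring
    have e1 : c * R₁ * (R₂ * (R₁ ^ (ν + 2) - R₂ ^ (ν + 2)))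
        = s ^ 2 * (R₁ - R₂) := by
      have : s ^ 2 * (R₁ - R₂) = - (s ^ 2 * (R₂ - R₁)) := by ring
      rw [this, key]; ring
    have e2 : c * R₁ * (((ν:ℝ) + 2) * R₁ ^ (ν + 2) * (R₁ - R₂))
        = β * R₁ ^ (ν + 3) * (R₁ - R₂) := by rw [hβc]; ring
    rw [e1, e2] at hmul
    have hpos : 0 < R₁ - R₂ := by linarith
    exact lt_of_mul_lt_mul_right (by linarith [hmul]) hpos.le
  constructor
  · constructor
    · exact hlt
    · intro h
      rcases lt_trichotomy R₁ R₂ with h' | h' | h'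
      · exact h'
      · exact absurd h'.symm hne
      · exact absurd h (not_lt_of_gt (hgt h'))
  · constructor
    · exact hgt
    · intro h
      rcases lt_trichotomy R₂ R₁ with h' | h' | h'
      · exact h'
      · exact absurd h' hne
      · exact absurd h (not_lt_of_gt (hlt h'))
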